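/- arXiv:hep-th/9412031 — 2 statements merged into one kernel-verified Lean document; each statement's English description precedes it below -/
import Mathlib

section
/- Let 𝔤 be a Lie algebra acting on a manifold M by a Lie algebra morphism ρ: 𝔤 → Vect(M), and let r = Σᵢ aᵢ ∧ bᵢ ∈ Λ²𝔤. Define the bracket {f,g} = Σᵢ (ρ(aᵢ)f · ρ(bᵢ)g − ρ(bᵢ)f · ρ(aᵢ)g) on C^∞(M). If the image under ρ of the Schouten bracket [r,r] = [r¹²,r¹³] + [r¹²,r²³] + [r¹³,r²³] ∈ Λ³𝔤 vanishes as a 3-vector field on M, then {·,·} satisfies the Jacobi identity, and hence is a Poisson bracket on M. -/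
private lemma stmt5_aux {A : Type*} [AddCommGroup A] [Module ℝ A] {n : ℕ}
    (F G : Fin n → Fin n → A)
    (hFG : ∀ i j, F i j + F j i = G i j + G j i)
    (hG : ∑ i : Fin n, ∑ j : Fin n, G i j = 0) :
    ∑ i : Fin n, ∑ j : Fin n, F i j = 0 := by
  have h1 : ∑ i : Fin n, ∑ j : Fin n, F j i = ∑ i : Fin n, ∑ j : Fin n, F i j :=
    Finset.sum_comm
  have h2 : ∑ i : Fin n, ∑ j : Fin n, G j i = ∑ i : Fin n, ∑ j : Fin n, G i j :=
    Finset.sum_comm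
  have h3 : (∑ i : Fin n, ∑ j : Fin n, F i j) + (∑ i : Fin n, ∑ j : Fin n, F i j) = 0 := by
    calc (∑ i : Fin n, ∑ j : Fin n, F i j) + (∑ i : Fin n, ∑ j : Fin n, F i j)
        = (∑ i : Fin n, ∑ j : Fin n, F i j) + (∑ i : Fin n, ∑ j : Fin n, F j i) := by
          rw [h1]
      _ = ∑ i : Fin n, ∑ j : Fin n, (F i j + F j i) := by
          simp only [← Finset.sum_add_distrib]
      _ = ∑ i : Fin n, ∑ j : Fin n, (G i j + G j i) :=
          Finset.sum_congr rfl fun i _ => Finset.sum_congr rfl fun j _ => hFG i j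
      _ = (∑ i : Fin n, ∑ j : Fin n, G i j) + (∑ i : Fin n, ∑ j : Fin n, G j i) := by
          simp only [Finset.sum_add_distrib]
      _ = 0 := by rw [h2, hG, add_zero]
  have h4 : (2 : ℝ) • (∑ i : Fin n, ∑ j : Fin n, F i j) = 0 := by
    rw [two_smul]; exact h3
  have h5 : ((2 : ℝ)⁻¹ * 2) • (∑ i : Fin n, ∑ j : Fin n, F i j)
      = ∑ i : Fin n, ∑ j : Fin n, F i j := by norm_num
  rw [← h5, mul_smul, h4, smul_zero]

/-- if a Lie algebra `𝔤` acts on (the function algebra of) a manifold by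
derivations via `ρ`, `r = Σᵢ aᵢ ∧ bᵢ ∈ Λ²𝔤`, and the image under `ρ` of the Schouten
bracket `[r,r] = [r¹²,r¹³]+[r¹²,r²³]+[r¹³,r²³]` vanishes as a 3-vector field, then the
bracket `{f,g} = Σᵢ (ρ(aᵢ)f·ρ(bᵢ)g − ρ(bᵢ)f·ρ(aᵢ)g)` satisfies the Jacobi identity,
hence is a Poisson bracket. -/
theorem stmt_5 {g A : Type*} [LieRing g] [LieAlgebra ℝ g]
    [CommRing A] [Algebra ℝ A]
    (ρ : g →ₗ[ℝ] Module.End ℝ A)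
    (hder : ∀ (x : g) (f₁ f₂ : A), ρ x (f₁ * f₂) = f₁ * ρ x f₂ + ρ x f₁ * f₂)
    (hlie : ∀ x y : g, ρ ⁅x, y⁆ = ρ x * ρ y - ρ y * ρ x)
    {n : ℕ} (a b : Fin n → g) :
    -- the full (antisymmetrized) tensor of r: r = Σ_k r1 k ⊗ r2 k
    let r1 : Fin n ⊕ Fin n → g := Sum.elim a b
    let r2 : Fin n ⊕ Fin n → g := Sum.elim b (fun i => -a i)
    -- the R-matrix bracket
    let br : A → A → A := fun f₁ f₂ =>
      ∑ i : Fin n, (ρ (a i) f₁ * ρ (b i) f₂ - ρ (b i) f₁ * ρ (a i) f₂)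
    -- hypothesis: ρ([r,r]) = 0 as a 3-vector field
    (∀ f₁ f₂ f₃ : A,
      ∑ k : Fin n ⊕ Fin n, ∑ l : Fin n ⊕ Fin n,
        (ρ ⁅r1 k, r1 l⁆ f₁ * (ρ (r2 k) f₂ * ρ (r2 l) f₃)
          + ρ (r1 k) f₁ * (ρ ⁅r2 k, r1 l⁆ f₂ * ρ (r2 l) f₃)
          + ρ (r1 k) f₁ * (ρ (r1 l) f₂ * ρ ⁅r2 k, r2 l⁆ f₃)) = 0) →
    -- conclusion: Jacobi identity
    ∀ f₁ f₂ f₃ : A,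
      br f₁ (br f₂ f₃) + br f₂ (br f₃ f₁) + br f₃ (br f₁ f₂) = 0 := by
  intro r1 r2 br H f₁ f₂ f₃
  have hlie' : ∀ (x y : g) (f : A), ρ ⁅x, y⁆ f = ρ x (ρ y f) - ρ y (ρ x f) := by
    intro x y f
    rw [hlie]
    simp [LinearMap.sub_apply, Module.End.mul_apply]
  have hbr : ∀ u v : A,
      br u v = ∑ i : Fin n, (ρ (a i) u * ρ (b i) v - ρ (b i) u * ρ (a i) v) :=
    fun _ _ => rfl
  have hr1 : ∀ k, r1 k = Sum.elim a b k := fun _ => rfl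
  have hr2 : ∀ k, r2 k = Sum.elim b (fun i => -a i) k := fun _ => rfl
  have hx : ∀ (x : g) (v w : A), ρ x (br v w) = ∑ j : Fin n,
      (ρ x (ρ (a j) v) * ρ (b j) w + ρ (a j) v * ρ x (ρ (b j) w)
        - (ρ x (ρ (b j) v) * ρ (a j) w + ρ (b j) v * ρ x (ρ (a j) w))) := by
    intro x v w
    rw [hbr, map_sum]
    refine Finset.sum_congr rfl fun j _ => ?_
    rw [map_sub, hder, hder]
    ring
  have hT : ∀ u v w : A, br u (br v w) = ∑ i : Fin n, ∑ j : Fin n,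
      (ρ (a i) u * (ρ (b i) (ρ (a j) v) * ρ (b j) w + ρ (a j) v * ρ (b i) (ρ (b j) w)
          - (ρ (b i) (ρ (b j) v) * ρ (a j) w + ρ (b j) v * ρ (b i) (ρ (a j) w)))
        - ρ (b i) u * (ρ (a i) (ρ (a j) v) * ρ (b j) w + ρ (a j) v * ρ (a i) (ρ (b j) w)
          - (ρ (a i) (ρ (b j) v) * ρ (a j) w + ρ (b j) v * ρ (a i) (ρ (a j) w)))) := by
    intro u v w
    rw [hbr]
    refine Finset.sum_congr rfl fun i _ => ?_
    rw [hx, hx, Finset.mul_sum, Finset.mul_sum, ← Finset.sum_sub_distrib]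
  rw [hT f₁ f₂ f₃, hT f₂ f₃ f₁, hT f₃ f₁ f₂]
  simp only [← Finset.sum_add_distrib]
  have h0 := H f₁ f₂ f₃
  simp only [hr1, hr2, Fintype.sum_sum_type, Sum.elim_inl, Sum.elim_inr,
    ← Finset.sum_add_distrib] at h0
  refine stmt5_aux _ _ ?_ h0
  intro i j
  simp only [hlie', map_neg, LinearMap.neg_apply, lie_neg, neg_lie, neg_neg]
  ring
end

section
/- Let a Lie group G act on a manifold M, let {·,·}_inv be a G-invariant Poisson bracket on C^∞(M), and let {·,·} be the bracket induced by a bivector ρ(r) coming from an element r ∈ Λ²𝔤 via the infinitesimal action ρ: 𝔤 → Vect(M), and assume {·,·} is itself a Poisson bracket. Then the two brackets are compatible: for all scalars a, b, the bracket a{·,·} + b{·,·}_inv satisfies the Jacobi identity, i.e., is a Poisson bracket. -/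
private lemma mixed_i {A : Type*} [CommRing A] [Algebra ℝ A]
    (X Y : Module.End ℝ A) (P : A →ₗ[ℝ] A →ₗ[ℝ] A)
    (hPskew : ∀ f₁ f₂ : A, P f₁ f₂ = -P f₂ f₁)
    (hPder : ∀ f₁ f₂ f₃ : A, P f₁ (f₂ * f₃) = P f₁ f₂ * f₃ + f₂ * P f₁ f₃)
    (hX : ∀ f g : A, X (P f g) = P (X f) g + P f (X g))
    (hY : ∀ f g : A, Y (P f g) = P (Y f) g + P f (Y g))
    (f₁ f₂ f₃ : A) :
    (X f₁ * Y (P f₂ f₃) - Y f₁ * X (P f₂ f₃))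
    + (X f₂ * Y (P f₃ f₁) - Y f₂ * X (P f₃ f₁))
    + (X f₃ * Y (P f₁ f₂) - Y f₃ * X (P f₁ f₂))
    + (P f₁ (X f₂ * Y f₃ - Y f₂ * X f₃)
    + P f₂ (X f₃ * Y f₁ - Y f₃ * X f₁)
    + P f₃ (X f₁ * Y f₂ - Y f₁ * X f₂)) = 0 := by
  simp only [map_sub, hPder, hX, hY]
  rw [hPskew (X f₂) f₃, hPskew (Y f₂) f₃, hPskew (X f₃) f₁, hPskew (Y f₃) f₁,
    hPskew (X f₁) f₂, hPskew (Y f₁) f₂]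
  ring

/-- an `R`-matrix bracket `{·,·}` (assumed Poisson) coming from `r ∈ Λ²𝔤` via an
infinitesimal action `ρ` by derivations, and a `𝔤`-invariant Poisson bracket `{·,·}_inv = P`,
are compatible: every linear combination `a{·,·} + bP` satisfies the Jacobi identity. -/
theorem stmt_6 {g A : Type*} [LieRing g] [LieAlgebra ℝ g]
    [CommRing A] [Algebra ℝ A]
    (ρ : g →ₗ[ℝ] Module.End ℝ A)
    (hder : ∀ (x : g) (f₁ f₂ : A), ρ x (f₁ * f₂) = f₁ * ρ x f₂ + ρ x f₁ * f₂)
    (hlie : ∀ x y : g, ρ ⁅x, y⁆ = ρ x * ρ y - ρ y * ρ x)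
    {n : ℕ} (a b : Fin n → g)
    (P : A →ₗ[ℝ] A →ₗ[ℝ] A)
    (hPskew : ∀ f₁ f₂ : A, P f₁ f₂ = -P f₂ f₁)
    (hPder : ∀ f₁ f₂ f₃ : A, P f₁ (f₂ * f₃) = P f₁ f₂ * f₃ + f₂ * P f₁ f₃)
    (hPjac : ∀ f₁ f₂ f₃ : A, P f₁ (P f₂ f₃) + P f₂ (P f₃ f₁) + P f₃ (P f₁ f₂) = 0)
    -- 𝔤-invariance (infinitesimal G-invariance) of P
    (hPinv : ∀ (x : g) (f₁ f₂ : A), ρ x (P f₁ f₂) = P (ρ x f₁) f₂ + P f₁ (ρ x f₂)) :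
    let br : A → A → A := fun f₁ f₂ =>
      ∑ i : Fin n, (ρ (a i) f₁ * ρ (b i) f₂ - ρ (b i) f₁ * ρ (a i) f₂)
    -- hypothesis: the R-matrix bracket is itself Poisson
    (∀ f₁ f₂ f₃ : A, br f₁ (br f₂ f₃) + br f₂ (br f₃ f₁) + br f₃ (br f₁ f₂) = 0) →
    -- conclusion: all linear combinations satisfy Jacobi
    ∀ s t : ℝ, ∀ f₁ f₂ f₃ : A,
      (let C : A → A → A := fun f₁ f₂ => s • br f₁ f₂ + t • P f₁ f₂
       C f₁ (C f₂ f₃) + C f₂ (C f₃ f₁) + C f₃ (C f₁ f₂) = 0) := by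
  intro br hjac s t f₁ f₂ f₃ C
  have hbrdef : br = fun f₁ f₂ : A =>
      ∑ i : Fin n, (ρ (a i) f₁ * ρ (b i) f₂ - ρ (b i) f₁ * ρ (a i) f₂) := rfl
  have hlin : ∀ (f x y : A) (c d : ℝ), br f (c • x + d • y) = c • br f x + d • br f y := by
    intro f x y c d
    simp only [hbrdef, Finset.smul_sum, ← Finset.sum_add_distrib]
    refine Finset.sum_congr rfl fun i _ => ?_
    simp only [map_add, map_smul, mul_add, mul_smul_comm, smul_sub, smul_add]
    module
  have hmix : ∀ g₁ g₂ g₃ : A,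
      br g₁ (P g₂ g₃) + br g₂ (P g₃ g₁) + br g₃ (P g₁ g₂)
      + (P g₁ (br g₂ g₃) + P g₂ (br g₃ g₁) + P g₃ (br g₁ g₂)) = 0 := by
    intro g₁ g₂ g₃
    simp only [hbrdef, map_sum, ← Finset.sum_add_distrib]
    refine Finset.sum_eq_zero fun i _ => ?_
    exact mixed_i (ρ (a i)) (ρ (b i)) P hPskew hPder
      (fun f g => hPinv (a i) f g) (fun f g => hPinv (b i) f g) g₁ g₂ g₃
  have hCdef : C = fun f g : A => s • br f g + t • P f g := rfl
  simp only [hCdef]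
  have e1 : ∀ u v w : A, br u (s • br v w + t • P v w)
      = s • br u (br v w) + t • br u (P v w) := fun u v w => hlin u _ _ s t
  have e2 : ∀ u v w : A, P u (s • br v w + t • P v w)
      = s • P u (br v w) + t • P u (P v w) := by
    intro u v w; simp [map_add, map_smul]
  rw [e1, e1, e1, e2, e2, e2]
  have h1 := hjac f₁ f₂ f₃
  have h2 := hPjac f₁ f₂ f₃
  have h3 := hmix f₁ f₂ f₃
  linear_combination (norm := module) (s * s) • h1 + (t * t) • h2 + (s * t) • h3
end
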